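/- Let V be a real vector space of dimension m ≥ 2 and let ρ_a be an antisymmetric bilinear form on V. Define A(x,y)z := (-1/(1+m))·(2ρ_a(x,y)z + ρ_a(x,z)y - ρ_a(y,z)x). Then A is an affine algebraic curvature operator (antisymmetric and satisfying the first Bianchi identity) whose Ricci tensor Tr(z ↦ A(z,x)y) equals ρ_a(x,y). -/

import Mathlib

lemma trace_smulRight' {V : Type*} [AddCommGroup V] [Module ℝ V] [FiniteDimensional ℝ V]
    (f : V →ₗ[ℝ] ℝ) (v : V) : LinearMap.trace ℝ V (f.smulRight v) = f v := by
  have h : f.smulRight v = dualTensorHom ℝ V V (f ⊗ₜ v) := by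
    ext x; simp
  rw [h, LinearMap.trace_eq_contract_apply, contractLeft_apply]

theorem stmt1 {V : Type*} [AddCommGroup V] [Module ℝ V] [FiniteDimensional ℝ V]
    (hm : 2 ≤ Module.finrank ℝ V)
    (ρa : V →ₗ[ℝ] V →ₗ[ℝ] ℝ) (hρa : ∀ x y, ρa x y = - ρa y x)
    (A : V → V → V → V)
    (hA : ∀ x y z, A x y z =
      (-1 / (1 + (Module.finrank ℝ V : ℝ))) •
        ((2 : ℝ) • (ρa x y • z) + ρa x z • y - ρa y z • x)) :
    (∀ x y z, A x y z = - A y x z) ∧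
    (∀ x y z, A x y z + A y z x + A z x y = 0) ∧
    (∀ x y, ∀ L : V →ₗ[ℝ] V, (∀ z, L z = A z x y) →
      LinearMap.trace ℝ V L = ρa x y) := by
  refine ⟨?_, ?_, ?_⟩
  · intro x y z
    rw [hA, hA, hρa x y, hρa x z, hρa y z]
    module
  · intro x y z
    rw [hA, hA, hA, hρa y x, hρa z x, hρa z y]
    module
  · intro x y L hL
    set c : ℝ := -1 / (1 + (Module.finrank ℝ V : ℝ)) with hc
    have hLe : L = c • ((2:ℝ) • ((ρa.flip x).smulRight y) + (ρa.flip y).smulRight x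
        - (ρa x y) • (LinearMap.id : V →ₗ[ℝ] V)) := by
      ext z
      rw [hL z, hA]
      simp [smul_sub, smul_smul, mul_comm, mul_assoc]
    have hm' : (1 + (Module.finrank ℝ V : ℝ)) ≠ 0 := by
      have : (2:ℝ) ≤ (Module.finrank ℝ V : ℝ) := by exact_mod_cast hm
      positivity
    rw [hLe]
    simp only [map_smul, map_add, map_sub, trace_smulRight', LinearMap.trace_id,
      LinearMap.flip_apply, smul_eq_mul]
    rw [hρa y x]
    rw [hc]
    field_simp
    ring
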